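/- Let n ∈ ℕ and define the n × n matrix U_n by (U_n)_{i,j} = C(n - i, j - 1) if i + j ≤ n + 1 and 0 otherwise (indices 1 ≤ i, j ≤ n). Then U_n is invertible and its inverse is given by (U_n^{-1})_{i,j} = (-1)^{n+1+i+j} (U_n)_{n+1-i, n+1-j}. -/

import Mathlib

open Finset

/-- Orthogonality of signed binomial coefficients:
`∑ j, (-1)^j C(a,j) C(j,b) = (-1)^b δ_{ab}`. -/
lemma key_sum (N a b : ℕ) (ha : a < N) :
    ∑ j ∈ range N, (-1 : ℝ) ^ j * (a.choose j) * (j.choose b) =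
      if a = b then (-1 : ℝ) ^ b else 0 := by
  rcases lt_or_ge a b with hab | hba
  · rw [if_neg hab.ne]
    apply Finset.sum_eq_zero
    intro j hj
    rcases le_or_gt j a with h | h
    · have : j.choose b = 0 := Nat.choose_eq_zero_of_lt (lt_of_le_of_lt h hab)
      simp [this]
    · have : a.choose j = 0 := Nat.choose_eq_zero_of_lt h
      simp [this]
  · -- b ≤ a : restrict sum to Ico b (a+1)
    have e1 : ∑ j ∈ range (a + 1), (-1 : ℝ) ^ j * (a.choose j) * (j.choose b) =
        ∑ j ∈ range N, (-1 : ℝ) ^ j * (a.choose j) * (j.choose b) := by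
      refine Finset.sum_subset (Finset.range_subset_range.mpr (by omega)) ?_
      intro j hj hj'
      have : a < j := by
        simp only [Finset.mem_range] at hj hj'; omega
      simp [Nat.choose_eq_zero_of_lt this]
    have e2 : ∑ j ∈ Ico b (a + 1), (-1 : ℝ) ^ j * (a.choose j) * (j.choose b) =
        ∑ j ∈ range (a + 1), (-1 : ℝ) ^ j * (a.choose j) * (j.choose b) := by
      refine Finset.sum_subset ?_ ?_
      · intro j hj
        simp only [Finset.mem_Ico] at hj
        simp only [Finset.mem_range]; omega
      · intro j hj hj'
        have : j < b := by
          simp only [Finset.mem_range] at hj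
          simp only [Finset.mem_Ico] at hj'; omega
        simp [Nat.choose_eq_zero_of_lt this]
    rw [← e1, ← e2, Finset.sum_Ico_eq_sum_range]
    have h2 : ∀ t ∈ range (a + 1 - b), (-1 : ℝ) ^ (b + t) * (a.choose (b + t)) *
        ((b + t).choose b) = ((-1 : ℝ) ^ b * a.choose b) * ((-1 : ℝ) ^ t * (a - b).choose t) := by
      intro t ht
      simp only [Finset.mem_range] at ht
      have hbt : b + t ≤ a := by omega
      have hcast : ((a.choose (b + t)) : ℝ) * ((b + t).choose b)
          = (a.choose b : ℝ) * ((a - b).choose (b + t - b)) := by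
        exact_mod_cast congrArg (Nat.cast : ℕ → ℝ)
          (Nat.choose_mul (n := a) (Nat.le_add_right b t))
      rw [Nat.add_sub_cancel_left] at hcast
      rw [pow_add]
      linear_combination ((-1 : ℝ) ^ b * (-1 : ℝ) ^ t) * hcast
    rw [Finset.sum_congr rfl h2, ← Finset.mul_sum]
    have h3 : a + 1 - b = (a - b) + 1 := by omega
    rw [h3]
    have h4 : ∑ t ∈ range ((a - b) + 1), (-1 : ℝ) ^ t * ((a - b).choose t) =
        if a - b = 0 then 1 else 0 := by
      have := @Int.alternating_sum_range_choose (a - b)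
      exact_mod_cast congrArg (Int.cast : ℤ → ℝ) this
    rw [h4]
    rcases eq_or_ne a b with h | h
    · subst h; simp
    · have : a - b ≠ 0 := by omega
      rw [if_neg this, if_neg h]
      ring

/-- The anti-triangular binomial matrix `U_n` is invertible with
`(U_n⁻¹)_{i,j} = (-1)^{n+1+i+j} (U_n)_{n+1-i, n+1-j}` (1-based indices). -/
theorem binom_matrix_inverse (n : ℕ) (U : Matrix (Fin n) (Fin n) ℝ)
    (hU : ∀ i j : Fin n, U i j =
      if (i : ℕ) + 1 + ((j : ℕ) + 1) ≤ n + 1 then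
        (Nat.choose (n - ((i : ℕ) + 1)) ((j : ℕ) + 1 - 1) : ℝ)
      else 0) :
    IsUnit U ∧ ∀ i j : Fin n,
      U⁻¹ i j = (-1 : ℝ) ^ (n + 1 + ((i : ℕ) + 1) + ((j : ℕ) + 1)) * U i.rev j.rev := by
  -- simplified formula for U
  have hU' : ∀ i j : Fin n, U i j = ((n - 1 - (i : ℕ)).choose j : ℝ) := by
    intro i j
    rw [hU i j]
    have hi := i.isLt
    have hj := j.isLt
    split_ifs with h
    · congr 2 <;> omega
    · have : n - 1 - (i : ℕ) < (j : ℕ) := by omega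
      simp [Nat.choose_eq_zero_of_lt this]
  set V : Matrix (Fin n) (Fin n) ℝ := fun i j =>
    (-1 : ℝ) ^ (n + 1 + ((i : ℕ) + 1) + ((j : ℕ) + 1)) * U i.rev j.rev with hV
  have hmul : U * V = 1 := by
    ext i k
    have hi := i.isLt
    have hk := k.isLt
    rw [Matrix.mul_apply]
    have hone : (1 : Matrix (Fin n) (Fin n) ℝ) i k = if i = k then 1 else 0 :=
      Matrix.one_apply
    rw [hone]
    have hterm : ∀ j : Fin n, U i j * V j k =
        (-(-1 : ℝ) ^ (n + 1 + ((k : ℕ) + 1))) *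
        ((-1 : ℝ) ^ (j : ℕ) * ((n - 1 - (i : ℕ)).choose j : ℝ) *
          ((j : ℕ).choose (n - 1 - (k : ℕ)) : ℝ)) := by
      intro j
      have hj := j.isLt
      rw [hV]
      simp only
      rw [hU' i j, hU' j.rev k.rev]
      have hrev1 : ((j.rev : ℕ)) = n - 1 - (j : ℕ) := by
        simp [Fin.val_rev]; omega
      have hrev2 : ((k.rev : ℕ)) = n - 1 - (k : ℕ) := by
        simp [Fin.val_rev]; omega
      rw [hrev1, hrev2]
      have : n - 1 - (n - 1 - (j : ℕ)) = (j : ℕ) := by omega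
      rw [this]
      have hpow : (-1 : ℝ) ^ (n + 1 + ((j : ℕ) + 1) + ((k : ℕ) + 1)) =
          -((-1 : ℝ) ^ (n + 1 + ((k : ℕ) + 1)) * (-1 : ℝ) ^ (j : ℕ)) := by
        have h2 : n + 1 + ((j : ℕ) + 1) + ((k : ℕ) + 1) =
            (n + 1 + ((k : ℕ) + 1) + (j : ℕ)) + 1 := by omega
        rw [h2, pow_succ, pow_add]; ring
      rw [hpow]
      ring
    rw [Finset.sum_congr rfl (fun j _ => hterm j), ← Finset.mul_sum]
    have hs : ∑ j : Fin n, ((-1 : ℝ) ^ (j : ℕ) * ((n - 1 - (i : ℕ)).choose j : ℝ) *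
        ((j : ℕ).choose (n - 1 - (k : ℕ)) : ℝ)) =
        if n - 1 - (i : ℕ) = n - 1 - (k : ℕ) then (-1 : ℝ) ^ (n - 1 - (k : ℕ)) else 0 := by
      rw [Fin.sum_univ_eq_sum_range
        (fun j => (-1 : ℝ) ^ j * ((n - 1 - (i : ℕ)).choose j : ℝ) *
          ((j).choose (n - 1 - (k : ℕ)) : ℝ))]
      exact key_sum n _ _ (by omega)
    have hiff : (n - 1 - (i : ℕ) = n - 1 - (k : ℕ)) ↔ i = k := by
      rw [Fin.ext_iff]; omega
    rw [hs, if_congr hiff rfl rfl]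
    split_ifs with h
    · have hsg : (-1 : ℝ) ^ (n + 1 + ((k : ℕ) + 1)) * (-1 : ℝ) ^ (n - 1 - (k : ℕ)) = -1 := by
        rw [← pow_add]
        have : n + 1 + ((k : ℕ) + 1) + (n - 1 - (k : ℕ)) = 2 * n + 1 := by omega
        rw [this, pow_succ, pow_mul]; norm_num
      linear_combination -hsg
    · ring
  refine ⟨⟨⟨U, V, hmul, mul_eq_one_comm.mp hmul⟩, rfl⟩, ?_⟩
  intro i j
  rw [Matrix.inv_eq_right_inv hmul]
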